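/- arXiv:1701.04348 — 4 statements merged into one kernel-verified Lean document; each statement's English description precedes it below -/
import Mathlib

section
/- Assume that φ : [0,∞) → [0,∞) is strictly increasing, continuous, concave, with φ(0) = 0, that ∫₀¹ dt/φ(t) < ∞, and that for some α ∈ (0,1) the function t ↦ t^{-α} φ(t) is strictly increasing on (0,1). Then there exists a function ψ : [0,∞) → [0,∞) which is strictly increasing, continuous, concave, with ψ(0) = 0, such that ∫₀¹ dt/ψ(t) < ∞ and lim_{t→0⁺} ψ(t)/φ(t) = 0. -/
open Set MeasureTheory Filter
open scoped Topology

/-- If `φ : [0,∞) → [0,∞)` is strictly increasing, continuous, concave with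
`φ(0)=0`, `∫₀¹ dt/φ(t) < ∞`, and `t ↦ t^(-α) φ(t)` is strictly increasing on `(0,1)` for some
`α ∈ (0,1)`, then there is `ψ : [0,∞) → [0,∞)` strictly increasing, continuous, concave with
`ψ(0)=0`, `∫₀¹ dt/ψ(t) < ∞` and `ψ(t)/φ(t) → 0` as `t → 0⁺`. -/
theorem exists_smaller_modulus (φ : ℝ → ℝ)
    (hmono : StrictMonoOn φ (Ici 0))
    (hcont : ContinuousOn φ (Ici 0))
    (hconc : ConcaveOn ℝ (Ici 0) φ)
    (h0 : φ 0 = 0)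
    (hnonneg : ∀ t, 0 ≤ t → 0 ≤ φ t)
    (hint : IntegrableOn (fun t => 1 / φ t) (Ioo (0:ℝ) 1))
    (hpow : ∃ α ∈ Ioo (0:ℝ) 1, StrictMonoOn (fun t => t ^ (-α) * φ t) (Ioo (0:ℝ) 1)) :
    ∃ ψ : ℝ → ℝ,
      StrictMonoOn ψ (Ici 0) ∧
      ContinuousOn ψ (Ici 0) ∧
      ConcaveOn ℝ (Ici 0) ψ ∧
      ψ 0 = 0 ∧
      (∀ t, 0 ≤ t → 0 ≤ ψ t) ∧
      IntegrableOn (fun t => 1 / ψ t) (Ioo (0:ℝ) 1) ∧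
      Tendsto (fun t => ψ t / φ t) (𝓝[>] (0:ℝ)) (𝓝 0) := by
  clear hpow
  -- basic facts about φ
  have hφpos : ∀ t : ℝ, 0 < t → 0 < φ t := by
    intro t ht
    have := hmono (self_mem_Ici) (le_of_lt ht : (0:ℝ) ≤ t) ht
    rwa [h0] at this
  -- integrability on Icc
  have hIcc : IntegrableOn (fun t => 1 / φ t) (Icc (0:ℝ) 1) := by
    rw [integrableOn_Icc_iff_integrableOn_Ioo]; exact hint
  -- the primitive of 1/φ
  set Fi : ℝ → ℝ := fun t => ∫ s in (0:ℝ)..t, 1 / φ s with hFi_def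
  have hII : ∀ t : ℝ, 0 ≤ t → t ≤ 1 → IntervalIntegrable (fun s => 1 / φ s) volume 0 t := by
    intro t h0t h1t
    rw [intervalIntegrable_iff_integrableOn_Ioc_of_le h0t]
    exact hIcc.mono_set (Ioc_subset_Icc_self.trans (Icc_subset_Icc le_rfl h1t))
  have Fi0 : Fi 0 = 0 := intervalIntegral.integral_same
  have Fi_mono : ∀ s t : ℝ, 0 ≤ s → s ≤ t → t ≤ 1 → Fi s ≤ Fi t := by
    intro s t h0s hst ht1
    have h1 : IntervalIntegrable (fun s => 1 / φ s) volume 0 s := hII s h0s (hst.trans ht1)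
    have h2 : IntervalIntegrable (fun s => 1 / φ s) volume s t := by
      rw [intervalIntegrable_iff_integrableOn_Ioc_of_le hst]
      exact hIcc.mono_set (Ioc_subset_Icc_self.trans (Icc_subset_Icc h0s ht1))
    have hadd := intervalIntegral.integral_add_adjacent_intervals h1 h2
    have hnn : 0 ≤ ∫ u in s..t, 1 / φ u := by
      apply intervalIntegral.integral_nonneg hst
      intro u hu
      exact one_div_nonneg.2 (hnonneg u (h0s.trans hu.1))
    simp only [hFi_def]
    nlinarith [hadd]
  have Fi_nonneg : ∀ t : ℝ, 0 ≤ t → t ≤ 1 → 0 ≤ Fi t := by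
    intro t h0t ht1
    have := Fi_mono 0 t le_rfl h0t ht1
    rwa [Fi0] at this
  have Fi_pos : ∀ t : ℝ, 0 < t → t ≤ 1 → 0 < Fi t := by
    intro t h0t ht1
    apply intervalIntegral.intervalIntegral_pos_of_pos_on (hII t h0t.le ht1)
    · intro x hx
      exact one_div_pos.2 (hφpos x hx.1)
    · exact h0t
  have FiCont : ContinuousOn Fi (Icc 0 1) := by
    have := intervalIntegral.continuousOn_primitive_interval
      (μ := volume) (f := fun s => 1 / φ s) (a := (0:ℝ)) (b := 1)
      (by rwa [uIcc_of_le (zero_le_one)])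
    rwa [uIcc_of_le (zero_le_one : (0:ℝ) ≤ 1)] at this
  have Fi_tendsto : Tendsto Fi (𝓝[>] (0:ℝ)) (𝓝 0) := by
    have h1 : ContinuousWithinAt Fi (Icc 0 1) 0 :=
      FiCont 0 (left_mem_Icc.2 zero_le_one)
    have h2 : Tendsto Fi (𝓝[Icc 0 1] (0:ℝ)) (𝓝 0) := by
      have := h1.tendsto; rwa [Fi0] at this
    apply h2.mono_left
    rw [← nhdsWithin_Ioc_eq_nhdsGT (zero_lt_one : (0:ℝ) < 1)]
    exact nhdsWithin_mono _ Ioc_subset_Icc_self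
  -- linear comparison from concavity: for 0 < δ ≤ s, φ s * δ ≤ φ δ * s
  have φ_lin : ∀ δ s : ℝ, 0 < δ → δ ≤ s → φ s * δ ≤ φ δ * s := by
    intro δ s hδ hδs
    have hs : 0 < s := hδ.trans_le hδs
    have ha : (0:ℝ) ≤ 1 - δ / s := by
      have : δ / s ≤ 1 := (div_le_one hs).2 hδs
      linarith
    have hb : (0:ℝ) ≤ δ / s := div_nonneg hδ.le hs.le
    have hcomb := hconc.2 (self_mem_Ici : (0:ℝ) ∈ Ici 0) (hs.le : s ∈ Ici 0) ha hb (by ring)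
    simp only [smul_eq_mul, mul_zero, h0, add_zero, zero_add] at hcomb
    have heq : δ / s * s = δ := div_mul_cancel₀ _ hs.ne'
    rw [heq] at hcomb
    have h3 : δ / s * φ s ≤ φ δ := by linarith [hcomb]
    calc φ s * δ = (δ / s * φ s) * s := by field_simp
    _ ≤ φ δ * s := by nlinarith [h3, hs]
  -- global linear bound
  have φ_le_lin : ∀ s : ℝ, 0 ≤ s → φ s ≤ φ 1 * (1 + s) := by
    intro s hs
    have hφ1 : 0 ≤ φ 1 := hnonneg 1 zero_le_one
    rcases le_total s 1 with h | h
    · have := hmono.monotoneOn (mem_Ici.2 hs) (mem_Ici.2 zero_le_one) h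
      nlinarith
    · have := φ_lin 1 s one_pos h
      nlinarith
  -- supporting lines of φ
  have sline : ∀ t : ℝ, 0 < t → ∃ m : ℝ, 0 ≤ m ∧ ∀ s, 0 ≤ s → φ s ≤ φ t + m * (s - t) := by
    intro t ht
    set S : Set ℝ := (fun s => (φ s - φ t) / (s - t)) '' Ioi t with hS
    have hSne : S.Nonempty := ⟨_, ⟨t + 1, by simp, rfl⟩⟩
    have hub : ∀ z ∈ Ioi t, (φ z - φ t) / (z - t) ≤ (φ t - φ 0) / (t - 0) := by
      intro z hz
      exact hconc.slope_anti_adjacent (self_mem_Ici) (mem_Ici.2 (ht.le.trans (le_of_lt hz)))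
        ht hz
    have hbdd : BddAbove S := by
      refine ⟨(φ t - φ 0) / (t - 0), ?_⟩
      rintro x ⟨z, hz, rfl⟩
      exact hub z hz
    set m := sSup S with hm
    have hmem1 : (φ (t+1) - φ t) / (t + 1 - t) ∈ S := ⟨t + 1, by simp, rfl⟩
    have hm0 : 0 ≤ m := by
      have h1 : 0 ≤ (φ (t+1) - φ t) / (t + 1 - t) := by
        have : φ t ≤ φ (t+1) := hmono.monotoneOn (mem_Ici.2 ht.le) (mem_Ici.2 (by linarith)) (by linarith)
        exact div_nonneg (by linarith) (by linarith)
      exact h1.trans (le_csSup hbdd hmem1)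
    refine ⟨m, hm0, ?_⟩
    intro s hs
    rcases lt_trichotomy s t with h | h | h
    · have hslope : m ≤ (φ t - φ s) / (t - s) := by
        apply csSup_le hSne
        rintro x ⟨z, hz, rfl⟩
        exact hconc.slope_anti_adjacent (mem_Ici.2 hs) (mem_Ici.2 (ht.le.trans (le_of_lt hz))) h hz
      have hts : 0 < t - s := by linarith
      rw [le_div_iff₀ hts] at hslope
      nlinarith
    · simp [h]
    · have hslope : (φ s - φ t) / (s - t) ≤ m := le_csSup hbdd ⟨s, h, rfl⟩
      have hst : 0 < s - t := by linarith
      rw [div_le_iff₀ hst] at hslope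
      nlinarith
  -- the weight u and the function ψ₀
  set u : ℝ → ℝ := fun s => Real.sqrt (Fi (min s 1)) with hu_def
  have u_nonneg : ∀ s : ℝ, 0 ≤ u s := fun s => Real.sqrt_nonneg _
  have u_bound : ∀ s : ℝ, 0 ≤ s → u s ≤ Real.sqrt (Fi 1) := by
    intro s hs
    apply Real.sqrt_le_sqrt
    exact Fi_mono (min s 1) 1 (le_min hs zero_le_one) (min_le_right _ _) le_rfl
  set ψ₀ : ℝ → ℝ := fun s => φ s * u s + s with hψ₀_def
  have ψ₀_ge_id : ∀ s : ℝ, 0 ≤ s → s ≤ ψ₀ s := by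
    intro s hs
    have := mul_nonneg (hnonneg s hs) (u_nonneg s)
    simp only [hψ₀_def]; linarith
  have ψ₀_nonneg : ∀ s : ℝ, 0 ≤ s → 0 ≤ ψ₀ s := fun s hs => hs.trans (ψ₀_ge_id s hs)
  have ψ₀0 : ψ₀ 0 = 0 := by simp [hψ₀_def, h0]
  -- the set of affine majorants
  set Maj : Set (ℝ × ℝ) := {p | ∀ s, 0 ≤ s → ψ₀ s ≤ p.1 + p.2 * s} with hMaj_def
  set ψ : ℝ → ℝ := fun t => sInf ((fun p : ℝ × ℝ => p.1 + p.2 * t) '' Maj) with hψ_def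
  have hF1 : 0 ≤ Real.sqrt (Fi 1) := Real.sqrt_nonneg _
  have Maj_ne : Maj.Nonempty := by
    refine ⟨(Real.sqrt (Fi 1) * φ 1, Real.sqrt (Fi 1) * φ 1 + 1), ?_⟩
    intro s hs
    have h1 : φ s * u s ≤ Real.sqrt (Fi 1) * φ s :=
      (mul_le_mul_of_nonneg_left (u_bound s hs) (hnonneg s hs)).trans_eq (mul_comm _ _)
    have h2 : φ s ≤ φ 1 * (1 + s) := φ_le_lin s hs
    have h3 : Real.sqrt (Fi 1) * φ s ≤ Real.sqrt (Fi 1) * (φ 1 * (1 + s)) :=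
      mul_le_mul_of_nonneg_left h2 hF1
    simp only [hψ₀_def]
    nlinarith
  have E_ne : ∀ t : ℝ, ((fun p : ℝ × ℝ => p.1 + p.2 * t) '' Maj).Nonempty :=
    fun t => Maj_ne.image _
  have E_bdd : ∀ t : ℝ, 0 ≤ t → ψ₀ t ∈ lowerBounds ((fun p : ℝ × ℝ => p.1 + p.2 * t) '' Maj) := by
    rintro t ht x ⟨p, hp, rfl⟩
    exact hp t ht
  have ψ_ge : ∀ t : ℝ, 0 ≤ t → ψ₀ t ≤ ψ t := by
    intro t ht
    exact le_csInf (E_ne t) (fun b hb => E_bdd t ht hb)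
  have ψ_le : ∀ p ∈ Maj, ∀ t : ℝ, 0 ≤ t → ψ t ≤ p.1 + p.2 * t := by
    intro p hp t ht
    exact csInf_le ⟨ψ₀ t, E_bdd t ht⟩ ⟨p, hp, rfl⟩
  have slope_ge_one : ∀ p ∈ Maj, (1:ℝ) ≤ p.2 := by
    intro p hp
    by_contra hlt
    push_neg at hlt
    set s := max 1 (p.1 / (1 - p.2) + 1) with hs_def
    have hs1 : (1:ℝ) ≤ s := le_max_left _ _
    have hs0 : (0:ℝ) ≤ s := zero_le_one.trans hs1
    have h1 : ψ₀ s ≤ p.1 + p.2 * s := hp s hs0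
    have h2 : s ≤ ψ₀ s := ψ₀_ge_id s hs0
    have h3 : p.1 / (1 - p.2) + 1 ≤ s := le_max_right _ _
    have h4 : 0 < 1 - p.2 := by linarith
    have h5 : p.1 / (1 - p.2) < s := by linarith
    rw [div_lt_iff₀ h4] at h5
    nlinarith
  have ψ_add : ∀ t₁ t₂ : ℝ, 0 ≤ t₁ → t₁ ≤ t₂ → ψ t₁ + (t₂ - t₁) ≤ ψ t₂ := by
    intro t₁ t₂ h1 h12
    apply le_csInf (E_ne t₂)
    rintro b ⟨p, hp, rfl⟩
    have hle : ψ t₁ ≤ p.1 + p.2 * t₁ := ψ_le p hp t₁ h1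
    have hp2 : (1:ℝ) ≤ p.2 := slope_ge_one p hp
    show ψ t₁ + (t₂ - t₁) ≤ p.1 + p.2 * t₂
    nlinarith
  -- strict monotonicity
  have ψ_smono : StrictMonoOn ψ (Ici 0) := by
    intro a ha b hb hab
    have := ψ_add a b ha hab.le
    linarith
  -- concavity
  have ψ_conc : ConcaveOn ℝ (Ici 0) ψ := by
    refine ⟨convex_Ici 0, ?_⟩
    intro x hx y hy a b ha hb hab
    apply le_csInf (E_ne _)
    rintro z ⟨p, hp, rfl⟩
    have h1 : ψ x ≤ p.1 + p.2 * x := ψ_le p hp x hx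
    have h2 : ψ y ≤ p.1 + p.2 * y := ψ_le p hp y hy
    show a • ψ x + b • ψ y ≤ p.1 + p.2 * (a • x + b • y)
    simp only [smul_eq_mul]
    calc a * ψ x + b * ψ y ≤ a * (p.1 + p.2 * x) + b * (p.1 + p.2 * y) :=
      add_le_add (mul_le_mul_of_nonneg_left h1 ha) (mul_le_mul_of_nonneg_left h2 hb)
    _ = p.1 * (a + b) + p.2 * (a * x + b * y) := by ring
    _ = p.1 + p.2 * (a * x + b * y) := by rw [hab]; ring
  -- the key upper bounds via adapted majorants
  have key : ∀ δ : ℝ, 0 < δ → δ ≤ 1 → ∀ t : ℝ, 0 < t →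
      ψ t ≤ Real.sqrt (Fi δ) * φ t + (Real.sqrt (Fi 1) * (φ δ / δ) + 1) * t ∧
      ψ 0 ≤ Real.sqrt (Fi δ) * φ t := by
    intro δ hδ hδ1 t ht
    obtain ⟨m, hm0, hms⟩ := sline t ht
    set A := Real.sqrt (Fi δ) with hA_def
    set B := Real.sqrt (Fi 1) * (φ δ / δ) + 1 with hB_def
    have hA0 : 0 ≤ A := Real.sqrt_nonneg _
    have hB1 : (1:ℝ) ≤ B := by
      have : 0 ≤ Real.sqrt (Fi 1) * (φ δ / δ) :=
        mul_nonneg hF1 (div_nonneg (hnonneg δ hδ.le) hδ.le)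
      rw [hB_def]; linarith
    have hmem : (A * (φ t - m * t), A * m + B) ∈ Maj := by
      intro s hs
      have hsupp : φ s ≤ φ t + m * (s - t) := hms s hs
      have hsupp0 : 0 ≤ φ t + m * (s - t) := (hnonneg s hs).trans hsupp
      show ψ₀ s ≤ (A * (φ t - m * t)) + (A * m + B) * s
      have goal_eq : (A * (φ t - m * t)) + (A * m + B) * s
          = A * (φ t + m * (s - t)) + B * s := by ring
      rw [goal_eq]
      rcases le_total s δ with hsd | hsd
      · -- small s : use u s ≤ A
        have hus : u s ≤ A := by
          rw [hu_def, hA_def]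
          apply Real.sqrt_le_sqrt
          have : min s 1 = s := min_eq_left (hsd.trans hδ1)
          rw [this]
          exact Fi_mono s δ hs hsd hδ1
        have h1 : φ s * u s ≤ A * φ s := by
          have := mul_le_mul_of_nonneg_left hus (hnonneg s hs)
          linarith [this]
        have h2 : A * φ s ≤ A * (φ t + m * (s - t)) := mul_le_mul_of_nonneg_left hsupp hA0
        have h3 : s ≤ B * s := le_mul_of_one_le_left hs hB1
        simp only [hψ₀_def]
        linarith
      · -- large s : use the linear bound
        have h1 : φ s * u s ≤ Real.sqrt (Fi 1) * φ s := by
          have := mul_le_mul_of_nonneg_left (u_bound s hs) (hnonneg s hs)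
          linarith [this]
        have h2 : φ s ≤ (φ δ / δ) * s := by
          have := φ_lin δ s hδ hsd
          rw [div_mul_eq_mul_div, le_div_iff₀ hδ]
          linarith
        have h3 : Real.sqrt (Fi 1) * φ s ≤ Real.sqrt (Fi 1) * ((φ δ / δ) * s) :=
          mul_le_mul_of_nonneg_left h2 hF1
        have h4 : 0 ≤ A * (φ t + m * (s - t)) := mul_nonneg hA0 hsupp0
        simp only [hψ₀_def, hB_def]
        nlinarith
    constructor
    · have := ψ_le _ hmem t ht.le
      calc ψ t ≤ (A * (φ t - m * t)) + (A * m + B) * t := this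
      _ = A * φ t + B * t := by ring
    · have := ψ_le _ hmem 0 le_rfl
      calc ψ 0 ≤ (A * (φ t - m * t)) + (A * m + B) * 0 := this
      _ = A * φ t - A * (m * t) := by ring
      _ ≤ A * φ t := by nlinarith [mul_nonneg hA0 (mul_nonneg hm0 ht.le)]
  -- φ tends to 0 at 0⁺
  have φ_tendsto : Tendsto φ (𝓝[>] (0:ℝ)) (𝓝 0) := by
    have h1 : ContinuousWithinAt φ (Ici 0) 0 := hcont 0 self_mem_Ici
    have h2 : Tendsto φ (𝓝[Ici 0] (0:ℝ)) (𝓝 0) := by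
      have := h1.tendsto; rwa [h0] at this
    exact h2.mono_left (nhdsWithin_mono _ Ioi_subset_Ici_self)
  -- ψ 0 = 0
  have ψ0 : ψ 0 = 0 := by
    have hge : 0 ≤ ψ 0 := by
      have := ψ_ge 0 le_rfl; rw [ψ₀0] at this; exact this
    have hle : ψ 0 ≤ 0 := by
      have hev : ∀ᶠ t in 𝓝[>] (0:ℝ), ψ 0 ≤ Real.sqrt (Fi 1) * φ t := by
        filter_upwards [Ioo_mem_nhdsGT_of_mem (show (0:ℝ) ∈ Ico 0 1 by simp)] with t ht
        exact (key 1 one_pos le_rfl t ht.1).2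
      have hlim : Tendsto (fun t => Real.sqrt (Fi 1) * φ t) (𝓝[>] (0:ℝ)) (𝓝 0) := by
        have := φ_tendsto.const_mul (Real.sqrt (Fi 1))
        simpa using this
      exact ge_of_tendsto hlim hev
    linarith
  -- nonnegativity
  have ψ_nonneg : ∀ t : ℝ, 0 ≤ t → 0 ≤ ψ t := by
    intro t ht
    exact (ψ₀_nonneg t ht).trans (ψ_ge t ht)
  have ψ_pos : ∀ t : ℝ, 0 < t → 0 < ψ t := by
    intro t ht
    have := ψ_ge t ht.le
    have := ψ₀_ge_id t ht.le
    linarith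
  -- continuity
  have ψ_tendsto0 : Tendsto ψ (𝓝[>] (0:ℝ)) (𝓝 0) := by
    apply squeeze_zero' (f := ψ) (g := fun t => Real.sqrt (Fi 1) * φ t
        + (Real.sqrt (Fi 1) * (φ 1 / 1) + 1) * t)
    · filter_upwards [Ioo_mem_nhdsGT_of_mem (show (0:ℝ) ∈ Ico 0 1 by simp)] with t ht
      exact ψ_nonneg t ht.1.le
    · filter_upwards [Ioo_mem_nhdsGT_of_mem (show (0:ℝ) ∈ Ico 0 1 by simp)] with t ht
      exact (key 1 one_pos le_rfl t ht.1).1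
    · have h1 : Tendsto (fun t : ℝ => Real.sqrt (Fi 1) * φ t) (𝓝[>] (0:ℝ)) (𝓝 0) := by
        have := φ_tendsto.const_mul (Real.sqrt (Fi 1)); simpa using this
      have h2 : Tendsto (fun t : ℝ => (Real.sqrt (Fi 1) * (φ 1 / 1) + 1) * t)
          (𝓝[>] (0:ℝ)) (𝓝 0) := by
        have hid : Tendsto (fun t : ℝ => t) (𝓝[>] (0:ℝ)) (𝓝 0) :=
          tendsto_id.mono_left nhdsWithin_le_nhds
        have := hid.const_mul (Real.sqrt (Fi 1) * (φ 1 / 1) + 1)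
        simpa using this
      have := h1.add h2
      simpa using this
  have ψ_contOn : ContinuousOn ψ (Ici 0) := by
    have hconc' : ConcaveOn ℝ (Ioi 0) ψ := ψ_conc.subset Ioi_subset_Ici_self (convex_Ioi 0)
    have hco : ContinuousOn ψ (Ioi 0) := hconc'.continuousOn isOpen_Ioi
    intro x hx
    rcases eq_or_lt_of_le (mem_Ici.1 hx) with hx0 | hx0
    · subst hx0
      unfold ContinuousWithinAt
      rw [ψ0, show (Ici (0:ℝ)) = Ioi 0 ∪ {0} by rw [Ioi_union_left]]
      rw [nhdsWithin_union, nhdsWithin_singleton]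
      rw [tendsto_sup]
      constructor
      · exact ψ_tendsto0
      · have : Tendsto ψ (pure (0:ℝ)) (𝓝 (ψ 0)) := tendsto_pure_nhds ψ 0
        rwa [ψ0] at this
    · exact (hco.continuousAt (isOpen_Ioi.mem_nhds hx0)).continuousWithinAt
  -- integrability of 1/ψ
  have hψint : IntegrableOn (fun t => 1 / ψ t) (Ioo (0:ℝ) 1) := by
    set w : ℝ → ℝ := fun t => 1 / (φ t * Real.sqrt (Fi t)) with hw_def
    have hφcontIoi : ContinuousOn (fun s => 1 / φ s) (Ioi 0) := by
      apply continuousOn_const.div (hcont.mono Ioi_subset_Ici_self)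
      intro x hx
      exact (hφpos x hx).ne'
    have wint : IntegrableOn w (Ioc 0 1) := by
      have kcont : ContinuousOn (fun t => 2 * Real.sqrt (Fi t)) (Icc 0 1) :=
        (FiCont.sqrt).const_smul (2:ℝ) |>.congr (fun x _ => by simp [smul_eq_mul])
      have kderiv : ∀ x ∈ Ioo (0:ℝ) 1, HasDerivAt (fun t => 2 * Real.sqrt (Fi t)) (w x) x := by
        intro x hx
        have hFi : HasDerivAt Fi (1 / φ x) x := by
          apply intervalIntegral.integral_hasDerivAt_right (hII x hx.1.le hx.2.le)
          · exact hφcontIoi.stronglyMeasurableAtFilter isOpen_Ioi x hx.1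
          · exact hφcontIoi.continuousAt (isOpen_Ioi.mem_nhds hx.1)
        have hFix : Fi x ≠ 0 := (Fi_pos x hx.1 hx.2.le).ne'
        have hsqrt := hFi.sqrt hFix
        have := hsqrt.const_mul (2:ℝ)
        refine this.congr_deriv ?_
        rw [hw_def]
        have hφx : φ x ≠ 0 := (hφpos x hx.1).ne'
        have hsx : Real.sqrt (Fi x) ≠ 0 :=
          ne_of_gt (Real.sqrt_pos.2 (Fi_pos x hx.1 hx.2.le))
        field_simp
      have wnonneg : ∀ x ∈ Ioo (0:ℝ) 1, 0 ≤ w x := by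
        intro x hx
        exact one_div_nonneg.2 (mul_nonneg (hnonneg x hx.1.le) (Real.sqrt_nonneg _))
      exact intervalIntegral.integrableOn_deriv_of_nonneg kcont kderiv wnonneg
    apply Integrable.mono' (wint.mono_set Ioo_subset_Ioc_self)
    · apply ContinuousOn.aestronglyMeasurable _ measurableSet_Ioo
      apply continuousOn_const.div
        (ψ_contOn.mono (fun y hy => mem_Ici.2 (mem_Ioi.1 (Ioo_subset_Ioi_self hy)).le))
      intro x hx
      exact (ψ_pos x hx.1).ne'
    · rw [ae_restrict_iff' measurableSet_Ioo]
      apply ae_of_all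
      intro t ht
      have hut : u t = Real.sqrt (Fi t) := by
        rw [hu_def]; simp [min_eq_left ht.2.le]
      have hlow : φ t * Real.sqrt (Fi t) ≤ ψ t := by
        have h1 := ψ_ge t ht.1.le
        have : ψ₀ t = φ t * Real.sqrt (Fi t) + t := by rw [hψ₀_def]; simp [hut]
        rw [this] at h1
        linarith [ht.1]
      have hlowpos : 0 < φ t * Real.sqrt (Fi t) :=
        mul_pos (hφpos t ht.1) (Real.sqrt_pos.2 (Fi_pos t ht.1 ht.2.le))
      rw [Real.norm_eq_abs, abs_of_nonneg (one_div_nonneg.2 (ψ_pos t ht.1).le), hw_def]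
      exact one_div_le_one_div_of_le hlowpos hlow
  -- t / φ t → 0 quantitatively: t ≤ 2 * Fi t * φ t on (0,1)
  have tphi : ∀ t : ℝ, 0 < t → t < 1 → t ≤ 2 * Fi t * φ t := by
    intro t ht ht1
    have hmeas : MeasurableSet (Ioc (t/2) t) := measurableSet_Ioc
    have hint2 : IntegrableOn (fun s => 1 / φ s) (Ioc (t/2) t) :=
      hIcc.mono_set ((Ioc_subset_Icc_self).trans (Icc_subset_Icc (by linarith) ht1.le))
    have hconst : IntegrableOn (fun _ => 1 / φ t) (Ioc (t/2) t) :=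
      integrableOn_const measure_Ioc_lt_top.ne
    have hmono2 : ∀ x ∈ Ioc (t/2) t, (1:ℝ) / φ t ≤ 1 / φ x := by
      intro x hx
      have hx0 : 0 < x := by have := hx.1; linarith
      exact one_div_le_one_div_of_le (hφpos x hx0)
        (hmono.monotoneOn (mem_Ici.2 hx0.le) (mem_Ici.2 ht.le) hx.2)
    have hstep1 : ∫ _ in Ioc (t/2) t, (1:ℝ) / φ t ≤ ∫ x in Ioc (t/2) t, 1 / φ x :=
      setIntegral_mono_on hconst hint2 hmeas hmono2
    have hstep2 : ∫ x in Ioc (t/2) t, 1 / φ x ≤ ∫ x in Ioc 0 t, 1 / φ x := by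
      apply setIntegral_mono_set
      · exact hIcc.mono_set ((Ioc_subset_Icc_self).trans (Icc_subset_Icc le_rfl ht1.le))
      · rw [EventuallyLE, ae_restrict_iff' measurableSet_Ioc]
        apply ae_of_all
        intro x hx
        exact one_div_nonneg.2 (hnonneg x hx.1.le)
      · exact HasSubset.Subset.eventuallyLE (Ioc_subset_Ioc_left (by linarith))
    have hconst_eq : ∫ _ in Ioc (t/2) t, (1:ℝ) / φ t = (t - t/2) * (1 / φ t) := by
      rw [setIntegral_const]
      rw [measureReal_def, Real.volume_Ioc, ENNReal.toReal_ofReal (by linarith)]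
      simp [smul_eq_mul]
    have hFi_eq : Fi t = ∫ x in Ioc 0 t, 1 / φ x := by
      rw [hFi_def]
      exact intervalIntegral.integral_of_le ht.le
    have hφt := hφpos t ht
    have hchain : (t - t/2) * (1 / φ t) ≤ Fi t := by
      rw [hFi_eq]; rw [← hconst_eq]; exact hstep1.trans hstep2
    have : t / 2 * (1 / φ t) ≤ Fi t := by
      calc t/2 * (1/φ t) = (t - t/2) * (1/φ t) := by ring_nf
      _ ≤ Fi t := hchain
    have h2 : t / 2 ≤ Fi t * φ t := by
      have := mul_le_mul_of_nonneg_right this hφt.le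
      calc t / 2 = t/2 * (1/φ t) * φ t := by field_simp
      _ ≤ Fi t * φ t := this
    linarith
  -- the limit ψ/φ → 0
  have ψ_div_tendsto : Tendsto (fun t => ψ t / φ t) (𝓝[>] (0:ℝ)) (𝓝 0) := by
    rw [NormedAddCommGroup.tendsto_nhds_zero]
    intro ε hε
    -- choose δ with √(Fi δ) < ε/2
    have hev1 : ∀ᶠ δ in 𝓝[>] (0:ℝ), Fi δ < (ε/2)^2 := by
      have := Fi_tendsto
      rw [Metric.tendsto_nhds] at this
      filter_upwards [this ((ε/2)^2) (by positivity)] with δ hδ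
      rw [Real.dist_eq, sub_zero] at hδ
      exact (le_abs_self _).trans_lt hδ
    obtain ⟨δ, hδFi, hδIoo⟩ :=
      (hev1.and (Ioo_mem_nhdsGT_of_mem (show (0:ℝ) ∈ Ico 0 1 by simp))).exists
    have hδ0 : 0 < δ := hδIoo.1
    have hδ1 : δ ≤ 1 := hδIoo.2.le
    have hsqrtδ : Real.sqrt (Fi δ) < ε/2 := by
      rw [Real.sqrt_lt' (by positivity)]
      exact hδFi
    obtain ⟨B, hB_def⟩ : ∃ B : ℝ, B = Real.sqrt (Fi 1) * (φ δ / δ) + 1 := ⟨_, rfl⟩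
    have hB0 : 0 < B := by
      have : 0 ≤ Real.sqrt (Fi 1) * (φ δ / δ) :=
        mul_nonneg hF1 (div_nonneg (hnonneg δ hδ0.le) hδ0.le)
      rw [hB_def]; linarith
    have hev2 : ∀ᶠ t in 𝓝[>] (0:ℝ), Fi t < ε / (8 * B) := by
      have := Fi_tendsto
      rw [Metric.tendsto_nhds] at this
      filter_upwards [this (ε / (8*B)) (div_pos hε (by linarith))] with t h
      rw [Real.dist_eq, sub_zero] at h
      exact (le_abs_self _).trans_lt h
    filter_upwards [hev2, Ioo_mem_nhdsGT_of_mem (show (0:ℝ) ∈ Ico 0 1 by simp)] with t hFit ht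
    have ht0 : 0 < t := ht.1
    have ht1 : t < 1 := ht.2
    have hφt := hφpos t ht0
    have hkey := (key δ hδ0 hδ1 t ht0).1
    rw [← hB_def] at hkey
    have htphi := tphi t ht0 ht1
    have hBt : B * t ≤ 2 * B * Fi t * φ t := by
      have h5 := mul_le_mul_of_nonneg_left htphi hB0.le
      calc B * t ≤ B * (2 * Fi t * φ t) := h5
      _ = 2 * B * Fi t * φ t := by ring
    have hdiv : ψ t / φ t ≤ Real.sqrt (Fi δ) + 2 * B * Fi t := by
      rw [div_le_iff₀ hφt]
      have hexp : (Real.sqrt (Fi δ) + 2 * B * Fi t) * φ t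
          = Real.sqrt (Fi δ) * φ t + 2 * B * Fi t * φ t := by ring
      rw [hexp]
      linarith [hkey, hBt]
    have h2 : 2 * B * Fi t < ε / 4 := by
      have h3 := mul_lt_mul_of_pos_left hFit (show (0:ℝ) < 2 * B by linarith)
      have h4 : 2 * B * (ε / (8 * B)) = ε / 4 := by field_simp; ring
      linarith
    rw [Real.norm_eq_abs, abs_of_nonneg (div_nonneg (ψ_nonneg t ht0.le) hφt.le)]
    linarith
  exact ⟨ψ, ψ_smono, ψ_contOn, ψ_conc, ψ0, ψ_nonneg, hψint, ψ_div_tendsto⟩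
end

section
/- Let φ : [0,∞) → [0,∞) be strictly increasing, continuous, concave, with φ(0) = 0 and lim_{t→∞} φ(t) = ∞, assume ∫₀¹ ds/φ(s) < ∞, and let N > 0 satisfy 2^{−N}(1 + ∫₀^{φ⁻¹(2^{−N})} ds/φ(s)) = 1. For k = 0, 1, 2, … set α_k = 2^{−(N+k)}(1 + ∫₀^{φ⁻¹(2^{−(N+k)})} ds/φ(s)). Then: (a) α₀ = 1; (b) 2α_{k+1} < α_k for all k; (c) lim_{k→∞} 2^k α_k = 2^{−N} > 0; (d) α_k ≤ 2^{−k} for all k, and there exists K₀ such that 2^{−(N+k)} < α_k < 2^{−(N+k−1)} for all k ≥ K₀. -/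
open Set MeasureTheory Filter
open scoped Topology

/-- Properties of the sequence
`α_k = 2^{−(N+k)} (1 + ∫₀^{φ⁻¹(2^{−(N+k)})} ds/φ(s))`. -/
theorem alpha_seq_properties (φ φinv : ℝ → ℝ)
    (hmono : StrictMonoOn φ (Ici 0))
    (hcont : ContinuousOn φ (Ici 0))
    (hconc : ConcaveOn ℝ (Ici 0) φ)
    (h0 : φ 0 = 0)
    (hnonneg : ∀ t, 0 ≤ t → 0 ≤ φ t)
    (htop : Tendsto φ atTop atTop)
    (hlinv : ∀ t, 0 ≤ t → φinv (φ t) = t)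
    (hrinv : ∀ s, 0 ≤ s → φ (φinv s) = s)
    (hint : IntegrableOn (fun s => 1 / φ s) (Ioo (0:ℝ) 1))
    (N : ℝ) (hN : 0 < N)
    (hNeq : (2:ℝ) ^ (-N) * (1 + ∫ s in Ioo (0:ℝ) (φinv ((2:ℝ) ^ (-N))), 1 / φ s) = 1)
    (α : ℕ → ℝ)
    (hα : ∀ k : ℕ, α k = (2:ℝ) ^ (-(N + (k:ℝ))) *
      (1 + ∫ s in Ioo (0:ℝ) (φinv ((2:ℝ) ^ (-(N + (k:ℝ))))), 1 / φ s)) :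
    α 0 = 1 ∧
    (∀ k : ℕ, 2 * α (k + 1) < α k) ∧
    Tendsto (fun k : ℕ => 2 ^ k * α k) atTop (𝓝 ((2:ℝ) ^ (-N))) ∧
    (0:ℝ) < (2:ℝ) ^ (-N) ∧
    (∀ k : ℕ, α k ≤ (2:ℝ) ^ (-(k:ℝ))) ∧
    ∃ K₀ : ℕ, ∀ k : ℕ, K₀ ≤ k →
      (2:ℝ) ^ (-(N + (k:ℝ))) < α k ∧ α k < (2:ℝ) ^ (-(N + (k:ℝ) - 1)) := by
  -- Basic positivity facts
  set f : ℝ → ℝ := fun s => 1 / φ s with hf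
  have hφpos : ∀ t : ℝ, 0 < t → 0 < φ t := by
    intro t ht
    have := hmono (self_mem_Ici) (le_of_lt ht : (0:ℝ) ≤ t) ht
    rwa [h0] at this
  -- surjectivity of φ onto [0,∞)
  have hsurj : ∀ s : ℝ, 0 ≤ s → ∃ t, 0 ≤ t ∧ φ t = s := by
    intro s hs
    obtain ⟨b, hb⟩ := (htop.eventually_ge_atTop s).exists_forall_of_atTop
    set b' := max b 0 with hb'
    have hb'0 : (0:ℝ) ≤ b' := le_max_right _ _
    have hsb' : s ≤ φ b' := hb b' (le_max_left _ _)
    have : s ∈ Icc (φ 0) (φ b') := ⟨by rw [h0]; exact hs, hsb'⟩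
    obtain ⟨t, ht, hts⟩ := intermediate_value_Icc hb'0 (hcont.mono (Icc_subset_Ici_self)) this
    exact ⟨t, ht.1, hts⟩
  have hinv_nonneg : ∀ s : ℝ, 0 ≤ s → 0 ≤ φinv s := by
    intro s hs
    obtain ⟨t, ht0, hts⟩ := hsurj s hs
    rw [← hts, hlinv t ht0]; exact ht0
  have hinv_lt : ∀ s s' : ℝ, 0 ≤ s → s < s' → φinv s < φinv s' := by
    intro s s' hs hss'
    have h1 := hrinv s hs
    have h2 := hrinv s' (le_trans hs hss'.le)
    have := hss'
    rw [← h1, ← h2] at this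
    exact (hmono.lt_iff_lt (hinv_nonneg s hs) (hinv_nonneg s' (hs.trans hss'.le))).mp this
  have hinv_pos : ∀ s : ℝ, 0 < s → 0 < φinv s := by
    intro s hs
    have := hinv_lt 0 s le_rfl hs
    have h00 : φinv 0 = 0 := by
      have h00' := hlinv 0 le_rfl
      rwa [h0] at h00'
    rwa [h00] at this
  -- the sequence β and x
  set β : ℕ → ℝ := fun k => (2:ℝ) ^ (-(N + (k:ℝ))) with hβ
  have hβpos : ∀ k, 0 < β k := fun k => Real.rpow_pos_of_pos (by norm_num) _
  have hβlt1 : ∀ k, β k < 1 := by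
    intro k
    have : -(N + (k:ℝ)) < 0 := by
      have : (0:ℝ) ≤ (k:ℝ) := Nat.cast_nonneg k
      linarith
    calc β k < (2:ℝ) ^ (0:ℝ) := Real.rpow_lt_rpow_left_iff (by norm_num) |>.mpr this
    _ = 1 := Real.rpow_zero 2
  have hβsucc : ∀ k : ℕ, 2 * β (k + 1) = β k := by
    intro k
    have : β (k+1) = (2:ℝ) ^ (-(N + (k:ℝ)) - 1) := by
      simp only [hβ]
      push_cast
      ring_nf
    rw [this, hβ]
    rw [Real.rpow_sub (by norm_num), Real.rpow_one]
    ring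
  have hβdec : ∀ k : ℕ, β (k+1) < β k := by
    intro k
    rw [← hβsucc k]
    linarith [hβpos (k+1)]
  set x : ℕ → ℝ := fun k => φinv (β k) with hx
  have hxpos : ∀ k, 0 < x k := fun k => hinv_pos _ (hβpos k)
  have hxdec : ∀ k, x (k+1) < x k := fun k => hinv_lt _ _ (hβpos (k+1)).le (hβdec k)
  have hxle0 : ∀ k, x k ≤ x 0 := by
    intro k
    induction k with
    | zero => exact le_rfl
    | succ n ih => exact (hxdec n).le.trans ih
  -- integrability
  have hint' : ∀ a : ℝ, 0 < a → IntegrableOn f (Ioc 0 a) := by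
    intro a ha
    have h1 : IntegrableOn f (Ioc 0 1) := (integrableOn_Ioc_iff_integrableOn_Ioo).mpr hint
    rcases le_or_gt a 1 with h | h
    · exact h1.mono_set (Ioc_subset_Ioc_right h)
    · have hc : ContinuousOn f (Icc 1 a) := by
        apply ContinuousOn.div continuousOn_const
        · exact hcont.mono (fun y hy => le_trans zero_le_one hy.1)
        · intro y hy
          exact (hφpos y (lt_of_lt_of_le one_pos hy.1)).ne'
      have h2 : IntegrableOn f (Ioc 1 a) :=
        (hc.integrableOn_Icc).mono_set Ioc_subset_Icc_self
      have : Ioc 0 1 ∪ Ioc 1 a = Ioc 0 a := Ioc_union_Ioc_eq_Ioc zero_le_one h.le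
      rw [← this]
      exact h1.union h2
  set M : ℝ := x 0 + 1 with hM
  have hMpos : 0 < M := by have := hxpos 0; linarith
  have hintM : IntegrableOn f (Icc 0 M) :=
    (integrableOn_Icc_iff_integrableOn_Ioc).mpr (hint' M hMpos)
  set G : ℝ → ℝ := fun y => ∫ s in Ioc (0:ℝ) y, f s with hG
  have hGcont : ContinuousOn G (Icc 0 M) := intervalIntegral.continuousOn_primitive hintM
  have hG0 : G 0 = 0 := by simp [hG]
  have hGI : ∀ y : ℝ, (∫ s in Ioo (0:ℝ) y, f s) = G y := fun y =>
    (MeasureTheory.integral_Ioc_eq_integral_Ioo).symm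
  -- strict monotonicity of G
  have hGlt : ∀ a b : ℝ, 0 ≤ a → a < b → G a < G b := by
    intro a b ha hab
    have hb : 0 < b := lt_of_le_of_lt ha hab
    have hIa : IntervalIntegrable f volume 0 a := by
      rcases eq_or_lt_of_le ha with h | h
      · rw [← h]
      · exact (intervalIntegrable_iff_integrableOn_Ioc_of_le ha).mpr (hint' a h)
    have hIb : IntervalIntegrable f volume 0 b :=
      (intervalIntegrable_iff_integrableOn_Ioc_of_le hb.le).mpr (hint' b hb)
    have hIab : IntervalIntegrable f volume a b :=
      (intervalIntegrable_iff_integrableOn_Ioc_of_le hab.le).mpr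
        ((hint' b hb).mono_set (Ioc_subset_Ioc_left ha))
    have hGa : G a = ∫ s in (0:ℝ)..a, f s := (intervalIntegral.integral_of_le ha).symm
    have hGb : G b = ∫ s in (0:ℝ)..b, f s := (intervalIntegral.integral_of_le hb.le).symm
    have hadd : (∫ s in (0:ℝ)..a, f s) + (∫ s in a..b, f s) = ∫ s in (0:ℝ)..b, f s :=
      intervalIntegral.integral_add_adjacent_intervals hIa hIab
    have hpos : 0 < ∫ s in a..b, f s := by
      apply intervalIntegral.intervalIntegral_pos_of_pos_on hIab _ hab
      intro y hy
      have : 0 < y := lt_of_le_of_lt ha hy.1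
      exact one_div_pos.mpr (hφpos y this)
    rw [hGa, hGb, ← hadd]
    linarith
  have hGpos : ∀ b : ℝ, 0 < b → 0 < G b := by
    intro b hb
    have := hGlt 0 b le_rfl hb
    rwa [hG0] at this
  -- rewrite α
  have hαG : ∀ k, α k = β k * (1 + G (x k)) := by
    intro k
    rw [hα k, hGI]
  -- β tends to 0
  have hβeq : ∀ k : ℕ, β k = (2:ℝ)^(-N) * ((1:ℝ)/2)^k := by
    intro k
    have h2 : ((1:ℝ)/2)^k = (2:ℝ)^(-(k:ℝ)) := by
      rw [Real.rpow_neg (by norm_num), Real.rpow_natCast, one_div, inv_pow]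
    rw [h2, ← Real.rpow_add (by norm_num), show -N + -(k:ℝ) = -(N+(k:ℝ)) by ring]
  have hβ0 : Tendsto β atTop (𝓝 0) := by
    have h1 : Tendsto (fun k : ℕ => (2:ℝ)^(-N) * ((1:ℝ)/2)^k) atTop (𝓝 ((2:ℝ)^(-N) * 0)) :=
      (tendsto_pow_atTop_nhds_zero_of_lt_one (by norm_num) (by norm_num)).const_mul _
    rw [mul_zero] at h1
    have heq : β = fun k : ℕ => (2:ℝ)^(-N) * ((1:ℝ)/2)^k := funext hβeq
    rw [heq]
    exact h1
  -- x tends to 0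
  have hx0 : Tendsto x atTop (𝓝 0) := by
    rw [Metric.tendsto_atTop]
    intro ε hε
    have hφε : 0 < φ ε := hφpos ε hε
    obtain ⟨K, hK⟩ := (hβ0.eventually (eventually_lt_nhds hφε)).exists_forall_of_atTop
    refine ⟨K, fun k hk => ?_⟩
    have hβk : β k < φ ε := hK k hk
    have hxk : x k < ε := by
      have h1 : φ (x k) < φ ε := by
        rw [hrinv _ (hβpos k).le]; exact hβk
      exact (hmono.lt_iff_lt (hxpos k).le hε.le).mp h1
    rw [Real.dist_eq, sub_zero, abs_of_nonneg (hxpos k).le]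
    exact hxk
  -- G (x k) tends to 0
  have hGx0 : Tendsto (fun k => G (x k)) atTop (𝓝 0) := by
    have hmem : ∀ k, x k ∈ Icc (0:ℝ) M := fun k =>
      ⟨(hxpos k).le, by have := hxle0 k; simp only [hM]; linarith⟩
    have h0mem : (0:ℝ) ∈ Icc (0:ℝ) M := ⟨le_rfl, hMpos.le⟩
    have hcw : ContinuousWithinAt G (Icc 0 M) 0 := hGcont 0 h0mem
    have hxin : Tendsto x atTop (𝓝[Icc (0:ℝ) M] 0) :=
      tendsto_nhdsWithin_iff.mpr ⟨hx0, Eventually.of_forall hmem⟩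
    have := hcw.tendsto.comp hxin
    rwa [hG0] at this
  -- (a)
  have ha0 : α 0 = 1 := by
    have := hα 0
    simp only [Nat.cast_zero, add_zero] at this
    rw [this, hNeq]
  -- (b)
  have hb' : ∀ k : ℕ, 2 * α (k+1) < α k := by
    intro k
    rw [hαG, hαG, ← mul_assoc, hβsucc k]
    have hGlt' : G (x (k+1)) < G (x k) := hGlt _ _ (hxpos (k+1)).le (hxdec k)
    have := hβpos k
    nlinarith
  -- (c)
  have hkβ : ∀ k : ℕ, (2:ℝ)^k * β k = (2:ℝ)^(-N) := by
    intro k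
    rw [hβ, ← Real.rpow_natCast 2 k, ← Real.rpow_add (by norm_num)]
    ring_nf
  have hc' : Tendsto (fun k : ℕ => 2^k * α k) atTop (𝓝 ((2:ℝ)^(-N))) := by
    have h1 : Tendsto (fun k : ℕ => (2:ℝ)^(-N) * (1 + G (x k))) atTop
        (𝓝 ((2:ℝ)^(-N) * (1 + 0))) :=
      ((tendsto_const_nhds.add hGx0)).const_mul _
    rw [add_zero, mul_one] at h1
    convert h1 using 2 with k
    rw [hαG, ← mul_assoc, hkβ]
  -- (d1)
  have hd1 : ∀ k : ℕ, α k ≤ (2:ℝ)^(-(k:ℝ)) := by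
    intro k
    induction k with
    | zero => simp [ha0]
    | succ n ih =>
      have h2 : 2 * α (n+1) < α n := hb' n
      have : α (n+1) < α n / 2 := by linarith
      have hle : α n / 2 ≤ (2:ℝ)^(-(n:ℝ)) / 2 := by linarith
      have heq : (2:ℝ)^(-(n:ℝ)) / 2 = (2:ℝ)^(-((n+1:ℕ):ℝ)) := by
        push_cast
        rw [neg_add, Real.rpow_add (by norm_num : (0:ℝ) < 2)]
        rw [Real.rpow_neg_one]
        ring
      calc α (n+1) ≤ α n / 2 := this.le
        _ ≤ (2:ℝ)^(-(n:ℝ)) / 2 := hle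
        _ = _ := heq
  -- (d2)
  have hd2 : ∃ K₀ : ℕ, ∀ k : ℕ, K₀ ≤ k →
      (2:ℝ) ^ (-(N + (k:ℝ))) < α k ∧ α k < (2:ℝ) ^ (-(N + (k:ℝ) - 1)) := by
    obtain ⟨K₀, hK₀⟩ := (hGx0.eventually (eventually_lt_nhds one_pos)).exists_forall_of_atTop
    refine ⟨K₀, fun k hk => ?_⟩
    have hGk1 : G (x k) < 1 := hK₀ k hk
    have hGkpos : 0 < G (x k) := hGpos _ (hxpos k)
    constructor
    · rw [hαG]
      have := hβpos k
      nlinarith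
    · rw [hαG]
      have heq2 : (2:ℝ) ^ (-(N + (k:ℝ) - 1)) = 2 * β k := by
        rw [show -(N + (k:ℝ) - 1) = 1 + -(N + (k:ℝ)) by ring,
          Real.rpow_add (by norm_num), Real.rpow_one]
      rw [heq2]
      have := hβpos k
      nlinarith
  exact ⟨ha0, hb', hc', Real.rpow_pos_of_pos (by norm_num) _, hd1, hd2⟩
end

section
/- Let φ : [0,∞) → [0,∞) be strictly increasing, continuous, concave, with φ(0) = 0 and lim_{t→∞} φ(t) = ∞, assume ∫₀¹ ds/φ(s) < ∞, let N > 0 satisfy 2^{−N}(1 + ∫₀^{φ⁻¹(2^{−N})} ds/φ(s)) = 1, and set α_k = 2^{−(N+k)}(1 + ∫₀^{φ⁻¹(2^{−(N+k)})} ds/φ(s)) for k ≥ 0. For k ≥ 1 define β_k = (α_{k−1} − 2α_k)/4 = 2^{−(N+k+1)} ∫_{φ⁻¹(2^{−(N+k)})}^{φ⁻¹(2^{−(N+k−1)})} ds/φ(s). Then: (a) φ(2β_k) < 2^{−(N+k)+1}; (b) 2^{−(N+k)} ≤ φ(4β_k); (c) the sequence (β_k) is strictly decreasing and lim_{k→∞}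 β_k = 0. -/
open Set MeasureTheory Filter
open scoped Topology

private lemma aux_subadd (φ : ℝ → ℝ) (hconc : ConcaveOn ℝ (Ici 0) φ) (h0 : φ 0 = 0)
    {u v : ℝ} (hu : 0 ≤ u) (hv : 0 ≤ v) : φ (u + v) ≤ φ u + φ v := by
  rcases eq_or_lt_of_le (add_nonneg hu hv) with h | h
  · have hu0 : u = 0 := by linarith
    have hv0 : v = 0 := by linarith
    simp [hu0, hv0, h0]
  · have ht : (0:ℝ) < u + v := h
    have h1 := hconc.2 (mem_Ici.2 ht.le) (mem_Ici.2 (le_refl (0:ℝ)))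
      (show (0:ℝ) ≤ u / (u + v) by positivity) (show (0:ℝ) ≤ v / (u + v) by positivity)
      (by field_simp)
    have h2 := hconc.2 (mem_Ici.2 ht.le) (mem_Ici.2 (le_refl (0:ℝ)))
      (show (0:ℝ) ≤ v / (u + v) by positivity) (show (0:ℝ) ≤ u / (u + v) by positivity)
      (by field_simp; ring)
    simp only [smul_eq_mul, mul_zero, h0, add_zero] at h1 h2
    have e1 : u / (u + v) * (u + v) = u := by field_simp
    have e2 : v / (u + v) * (u + v) = v := by field_simp
    rw [e1] at h1
    rw [e2] at h2
    have e3 : u / (u + v) * φ (u + v) + v / (u + v) * φ (u + v) = φ (u + v) := by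
      field_simp
    linarith

private lemma aux_int_lt (f : ℝ → ℝ) {a b : ℝ} (c : ℝ) (hab : a < b)
    (hf : IntegrableOn f (Ioo a b))
    (hlt : ∀ s ∈ Ioo a b, f s < c) :
    (∫ s in Ioo a b, f s) < c * (b - a) := by
  have hc : IntegrableOn (fun _ : ℝ => c) (Ioo a b) :=
    integrableOn_const (by rw [Real.volume_Ioo]; exact ENNReal.ofReal_ne_top)
  have hnn : 0 ≤ᵐ[volume.restrict (Ioo a b)] fun s => c - f s := by
    filter_upwards [ae_restrict_mem measurableSet_Ioo] with s hs
    exact sub_nonneg.2 (hlt s hs).le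
  have hpos : 0 < ∫ s in Ioo a b, (c - f s) := by
    rw [setIntegral_pos_iff_support_of_nonneg_ae hnn (hc.sub hf)]
    refine lt_of_lt_of_le (show (0:ENNReal) < volume (Ioo a b) from ?_)
      (measure_mono (show Ioo a b ⊆ (Function.support fun s => c - f s) ∩ Ioo a b from ?_))
    · rw [Real.volume_Ioo]; exact ENNReal.ofReal_pos.2 (by linarith)
    · intro s hs
      exact ⟨by simp only [Function.mem_support]; exact sub_ne_zero.2 (ne_of_gt (hlt s hs)), hs⟩
  have heq : (∫ s in Ioo a b, (c - f s)) = c * (b - a) - ∫ s in Ioo a b, f s := by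
    rw [integral_sub hc hf, setIntegral_const, smul_eq_mul, Real.volume_real_Ioo_of_le (by linarith)]
    ring
  linarith

/-- Properties of the sequence `β_k = (α_{k−1} − 2α_k)/4`, `k ≥ 1`:
(a) `φ(2β_k) < 2^{−(N+k)+1}`; (b) `2^{−(N+k)} ≤ φ(4β_k)`; (c) `(β_k)` is strictly decreasing
with limit `0`.  (Here `β_k` also equals
`2^{−(N+k+1)} ∫_{φ⁻¹(2^{−(N+k)})}^{φ⁻¹(2^{−(N+k−1)})} ds/φ(s)`.) -/
theorem beta_seq_properties (φ φinv : ℝ → ℝ)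
    (hmono : StrictMonoOn φ (Ici 0))
    (hcont : ContinuousOn φ (Ici 0))
    (hconc : ConcaveOn ℝ (Ici 0) φ)
    (h0 : φ 0 = 0)
    (hnonneg : ∀ t, 0 ≤ t → 0 ≤ φ t)
    (htop : Tendsto φ atTop atTop)
    (hlinv : ∀ t, 0 ≤ t → φinv (φ t) = t)
    (hrinv : ∀ s, 0 ≤ s → φ (φinv s) = s)
    (hint : IntegrableOn (fun s => 1 / φ s) (Ioo (0:ℝ) 1))
    (N : ℝ) (hN : 0 < N)
    (hNeq : (2:ℝ) ^ (-N) * (1 + ∫ s in Ioo (0:ℝ) (φinv ((2:ℝ) ^ (-N))), 1 / φ s) = 1)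
    (α : ℕ → ℝ)
    (hα : ∀ k : ℕ, α k = (2:ℝ) ^ (-(N + (k:ℝ))) *
      (1 + ∫ s in Ioo (0:ℝ) (φinv ((2:ℝ) ^ (-(N + (k:ℝ))))), 1 / φ s))
    (β : ℕ → ℝ)
    (hβ : ∀ k : ℕ, β (k + 1) = (α k - 2 * α (k + 1)) / 4) :
    (∀ k : ℕ, β (k + 1) = (2:ℝ) ^ (-(N + (k:ℝ) + 2)) *
      ∫ s in Ioo (φinv ((2:ℝ) ^ (-(N + (k:ℝ) + 1)))) (φinv ((2:ℝ) ^ (-(N + (k:ℝ))))),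
        1 / φ s) ∧
    (∀ k : ℕ, φ (2 * β (k + 1)) < (2:ℝ) ^ (-(N + (k:ℝ) + 1) + 1)) ∧
    (∀ k : ℕ, (2:ℝ) ^ (-(N + (k:ℝ) + 1)) ≤ φ (4 * β (k + 1))) ∧
    StrictAnti (fun k : ℕ => β (k + 1)) ∧
    Tendsto (fun k : ℕ => β (k + 1)) atTop (𝓝 0) := by
  have two_pos : (0:ℝ) < 2 := by norm_num
  have hφpos : ∀ s : ℝ, 0 < s → 0 < φ s := by
    intro s hs
    have := hmono (mem_Ici.2 (le_refl (0:ℝ))) (mem_Ici.2 hs.le) hs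
    rwa [h0] at this
  have hinv_nonneg : ∀ s : ℝ, 0 ≤ s → 0 ≤ φinv s := by
    intro s hs
    obtain ⟨b, hbs, hb0⟩ : ∃ b : ℝ, s ≤ φ b ∧ 0 ≤ b :=
      ((htop.eventually_ge_atTop s).and (eventually_ge_atTop (0:ℝ))).exists
    have hmem : s ∈ Icc (φ 0) (φ b) := ⟨by rw [h0]; exact hs, hbs⟩
    obtain ⟨t, ht, hφt⟩ := intermediate_value_Icc hb0
      (hcont.mono (Icc_subset_Ici_self)) hmem
    have : φinv s = t := by rw [← hφt, hlinv t ht.1]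
    rw [this]; exact ht.1
  have hint' : ∀ b : ℝ, 0 ≤ b → IntegrableOn (fun s => 1 / φ s) (Ioo 0 b) := by
    intro b hb
    rcases le_or_gt b 1 with h | h
    · exact hint.mono_set (Ioo_subset_Ioo le_rfl h)
    · have hIcc : IntegrableOn (fun s => 1 / φ s) (Icc 1 b) := by
        apply ContinuousOn.integrableOn_compact isCompact_Icc
        apply ContinuousOn.div continuousOn_const
          (hcont.mono (fun s hs => le_trans zero_le_one hs.1))
        intro s hs
        exact (hφpos s (lt_of_lt_of_le one_pos hs.1)).ne'
      refine (hint.union hIcc).mono_set ?_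
      intro s hs
      rcases lt_or_ge s 1 with h1 | h1
      · exact Or.inl ⟨hs.1, h1⟩
      · exact Or.inr ⟨h1, hs.2.le⟩
  set c : ℝ → ℝ := fun r => (2:ℝ) ^ (-(N + r)) with hc_def
  set y : ℝ → ℝ := fun r => φinv (c r) with hy_def
  have hc_pos : ∀ r : ℝ, 0 < c r := fun r => Real.rpow_pos_of_pos two_pos _
  have hc_half : ∀ r : ℝ, c (r + 1) = c r / 2 := by
    intro r
    simp only [hc_def]
    rw [show -(N + (r + 1)) = -(N + r) + (-1) by ring, Real.rpow_add two_pos,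
      Real.rpow_neg_one]
    ring
  have hc2 : ∀ r : ℝ, c (r + 2) = c r / 4 := by
    intro r
    rw [show r + 2 = (r + 1) + 1 by ring, hc_half, hc_half]
    ring
  have hc_anti : ∀ {r r' : ℝ}, r < r' → c r' < c r := by
    intro r r' h
    exact (Real.rpow_lt_rpow_left_iff one_lt_two).2 (by linarith)
  have hy0 : ∀ r : ℝ, 0 ≤ y r := fun r => hinv_nonneg _ (hc_pos r).le
  have hyφ : ∀ r : ℝ, φ (y r) = c r := fun r => hrinv _ (hc_pos r).le
  have hy_pos : ∀ r : ℝ, 0 < y r := by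
    intro r
    rcases (hy0 r).lt_or_eq with h | h
    · exact h
    · exfalso
      have h1 := hyφ r
      rw [← h, h0] at h1
      exact absurd h1.symm (hc_pos r).ne'
  have hy_lt : ∀ {r r' : ℝ}, r < r' → y r' < y r := by
    intro r r' h
    by_contra hle
    push_neg at hle
    have h1 : φ (y r) ≤ φ (y r') :=
      hmono.monotoneOn (mem_Ici.2 (hy0 r)) (mem_Ici.2 (hy0 r')) hle
    rw [hyφ, hyφ] at h1
    exact absurd h1 (not_le.2 (hc_anti h))
  have hJint2 : ∀ r r' : ℝ, IntegrableOn (fun s => 1 / φ s) (Ioo (y r') (y r)) :=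
    fun r r' => (hint' (y r) (hy0 r)).mono_set (Ioo_subset_Ioo (hy0 r') le_rfl)
  have hsplit : ∀ r r' : ℝ, r < r' →
      (∫ s in Ioo 0 (y r), 1 / φ s) =
        (∫ s in Ioo 0 (y r'), 1 / φ s) + ∫ s in Ioo (y r') (y r), 1 / φ s := by
    intro r r' hrr
    have h1 : y r' < y r := hy_lt hrr
    have h2 : Ioo 0 (y r') ∪ Ico (y r') (y r) = Ioo 0 (y r) :=
      Ioo_union_Ico_eq_Ioo (hy_pos r') h1.le
    have hdisj : Disjoint (Ioo 0 (y r')) (Ico (y r') (y r)) := by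
      rw [Set.disjoint_left]
      intro s hs1 hs2
      exact absurd hs1.2 (not_lt.2 hs2.1)
    rw [← h2, setIntegral_union hdisj measurableSet_Ico (hint' _ (hy0 r'))
      ((hJint2 r r').congr_set_ae Ioo_ae_eq_Ico.symm), integral_Ico_eq_integral_Ioo]
  have hβc : ∀ k : ℕ, β (k + 1) =
      c (k:ℝ) / 4 * ∫ s in Ioo (y ((k:ℝ) + 1)) (y (k:ℝ)), 1 / φ s := by
    intro k
    have e1 : α k = c (k:ℝ) * (1 + ∫ s in Ioo 0 (y (k:ℝ)), 1 / φ s) := hα k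
    have e2 := hα (k + 1)
    push_cast at e2
    have e2' : α (k + 1) = c ((k:ℝ) + 1) * (1 + ∫ s in Ioo 0 (y ((k:ℝ) + 1)), 1 / φ s) := e2
    have e3 : c ((k:ℝ) + 1) = c (k:ℝ) / 2 := hc_half _
    have e4 := hsplit (k:ℝ) ((k:ℝ) + 1) (lt_add_one _)
    rw [hβ k, e1, e2', e3, e4]
    ring
  have hβ_lb : ∀ k : ℕ, (y (k:ℝ) - y ((k:ℝ) + 1)) / 4 ≤ β (k + 1) := by
    intro k
    have hyk : y ((k:ℝ) + 1) < y (k:ℝ) := hy_lt (lt_add_one _)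
    have hpt : ∀ s ∈ Ioo (y ((k:ℝ) + 1)) (y (k:ℝ)), 1 / c (k:ℝ) ≤ 1 / φ s := by
      intro s hs
      have hs0 : 0 < s := lt_of_le_of_lt (hy0 ((k:ℝ) + 1)) hs.1
      have hφs : φ s < c (k:ℝ) := by
        have := hmono (mem_Ici.2 hs0.le) (mem_Ici.2 (hy0 (k:ℝ))) hs.2
        rwa [hyφ] at this
      exact one_div_le_one_div_of_le (hφpos s hs0) hφs.le
    have hconst : IntegrableOn (fun _ : ℝ => 1 / c (k:ℝ)) (Ioo (y ((k:ℝ) + 1)) (y (k:ℝ))) :=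
      integrableOn_const (by rw [Real.volume_Ioo]; exact ENNReal.ofReal_ne_top)
    have h2 := setIntegral_mono_on hconst (hJint2 (k:ℝ) ((k:ℝ) + 1)) measurableSet_Ioo hpt
    rw [setIntegral_const, smul_eq_mul, Real.volume_real_Ioo_of_le (by linarith)] at h2
    have h3 : c (k:ℝ) / 4 * ((y (k:ℝ) - y ((k:ℝ) + 1)) * (1 / c (k:ℝ))) ≤
        c (k:ℝ) / 4 * ∫ s in Ioo (y ((k:ℝ) + 1)) (y (k:ℝ)), 1 / φ s :=
      mul_le_mul_of_nonneg_left h2 (div_nonneg (hc_pos _).le (by norm_num))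
    have hcne : c (k:ℝ) ≠ 0 := (hc_pos _).ne'
    have h4 : c (k:ℝ) / 4 * ((y (k:ℝ) - y ((k:ℝ) + 1)) * (1 / c (k:ℝ))) =
        (y (k:ℝ) - y ((k:ℝ) + 1)) / 4 := by
      field_simp
    rw [hβc k]
    linarith
  have hβ_ub : ∀ k : ℕ, β (k + 1) < (y (k:ℝ) - y ((k:ℝ) + 1)) / 2 := by
    intro k
    have hyk : y ((k:ℝ) + 1) < y (k:ℝ) := hy_lt (lt_add_one _)
    have h1 : (∫ s in Ioo (y ((k:ℝ) + 1)) (y (k:ℝ)), 1 / φ s) <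
        (1 / c ((k:ℝ) + 1)) * (y (k:ℝ) - y ((k:ℝ) + 1)) := by
      apply aux_int_lt _ _ hyk (hJint2 (k:ℝ) ((k:ℝ) + 1))
      intro s hs
      have hφs : c ((k:ℝ) + 1) < φ s := by
        have := hmono (mem_Ici.2 (hy0 ((k:ℝ) + 1)))
          (mem_Ici.2 (le_trans (hy0 ((k:ℝ) + 1)) hs.1.le)) hs.1
        rwa [hyφ] at this
      exact one_div_lt_one_div_of_lt (hc_pos _) hφs
    rw [hc_half] at h1
    have h2 : c (k:ℝ) / 4 * (∫ s in Ioo (y ((k:ℝ) + 1)) (y (k:ℝ)), 1 / φ s) <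
        c (k:ℝ) / 4 * ((1 / (c (k:ℝ) / 2)) * (y (k:ℝ) - y ((k:ℝ) + 1))) :=
      mul_lt_mul_of_pos_left h1 (div_pos (hc_pos _) (by norm_num))
    have hcne : c (k:ℝ) ≠ 0 := (hc_pos _).ne'
    have h3 : c (k:ℝ) / 4 * ((1 / (c (k:ℝ) / 2)) * (y (k:ℝ) - y ((k:ℝ) + 1))) =
        (y (k:ℝ) - y ((k:ℝ) + 1)) / 2 := by
      field_simp
      ring
    rw [hβc k]
    linarith
  have hconvex : ∀ r : ℝ, y (r + 1) ≤ 1 / 3 * y r + 2 / 3 * y (r + 2) := by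
    intro r
    have hkey : c (r + 1) = 1 / 3 * c r + 2 / 3 * c (r + 2) := by
      rw [hc_half, hc2]; ring
    have h1 := hconc.2 (mem_Ici.2 (hy0 r)) (mem_Ici.2 (hy0 (r + 2)))
      (show (0:ℝ) ≤ 1 / 3 by norm_num) (show (0:ℝ) ≤ 2 / 3 by norm_num) (by norm_num)
    simp only [smul_eq_mul] at h1
    rw [hyφ, hyφ] at h1
    by_contra hcon
    push_neg at hcon
    have hm0 : 0 ≤ 1 / 3 * y r + 2 / 3 * y (r + 2) := by
      have := hy0 r; have := hy0 (r + 2); linarith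
    have h2 : φ (1 / 3 * y r + 2 / 3 * y (r + 2)) < φ (y (r + 1)) :=
      hmono (mem_Ici.2 hm0) (mem_Ici.2 (hy0 _)) hcon
    rw [hyφ] at h2
    linarith
  have hc_eq : ∀ k : ℕ, c (k:ℝ) = (2:ℝ) ^ (-N) * ((2:ℝ)⁻¹) ^ k := by
    intro k
    simp only [hc_def]
    rw [show -(N + (k:ℝ)) = -N + (-(k:ℝ)) by ring, Real.rpow_add two_pos,
      Real.rpow_neg (by norm_num : (0:ℝ) ≤ 2) (k:ℝ), Real.rpow_natCast, ← inv_pow]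
  have htendc : Tendsto (fun k : ℕ => c (k:ℝ)) atTop (𝓝 0) := by
    simp only [hc_eq]
    have h := tendsto_pow_atTop_nhds_zero_of_lt_one
      (by norm_num : (0:ℝ) ≤ 2⁻¹) (by norm_num : (2:ℝ)⁻¹ < 1)
    simpa using h.const_mul ((2:ℝ) ^ (-N))
  have htendy : Tendsto (fun k : ℕ => y (k:ℝ)) atTop (𝓝 0) := by
    rw [Metric.tendsto_atTop]
    intro ε hε
    have hφε : 0 < φ ε := hφpos ε hε
    obtain ⟨K, hK⟩ := eventually_atTop.1 (htendc.eventually_lt_const hφε)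
    refine ⟨K, fun k hk => ?_⟩
    have h1 : y (k:ℝ) < ε := by
      by_contra h
      push_neg at h
      have h2 : φ ε ≤ φ (y (k:ℝ)) :=
        hmono.monotoneOn (mem_Ici.2 hε.le) (mem_Ici.2 (hy0 _)) h
      rw [hyφ] at h2
      exact absurd (hK k hk) (not_lt.2 h2)
    rw [Real.dist_eq, sub_zero, abs_of_nonneg (hy0 _)]
    exact h1
  refine ⟨?_, ?_, ?_, ?_, ?_⟩
  · intro k
    rw [show -(N + (k:ℝ) + 2) = -(N + ((k:ℝ) + 2)) by ring,
      show -(N + (k:ℝ) + 1) = -(N + ((k:ℝ) + 1)) by ring, hβc k, ← hc2 (k:ℝ)]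
  · intro k
    rw [show -(N + (k:ℝ) + 1) + 1 = -(N + (k:ℝ)) by ring]
    have hd : 0 < y (k:ℝ) - y ((k:ℝ) + 1) := sub_pos.2 (hy_lt (lt_add_one _))
    have h2 : 0 ≤ 2 * β (k + 1) := by linarith [hβ_lb k]
    have h3 : φ (2 * β (k + 1)) < φ (y (k:ℝ)) :=
      hmono (mem_Ici.2 h2) (mem_Ici.2 (hy0 _))
        (by linarith [hβ_ub k, hy_pos ((k:ℝ) + 1)])
    exact lt_of_lt_of_le h3 (le_of_eq (hyφ _))
  · intro k
    rw [show -(N + (k:ℝ) + 1) = -(N + ((k:ℝ) + 1)) by ring]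
    have hd : 0 ≤ y (k:ℝ) - y ((k:ℝ) + 1) := (sub_pos.2 (hy_lt (lt_add_one _))).le
    have h4 : y (k:ℝ) - y ((k:ℝ) + 1) ≤ 4 * β (k + 1) := by linarith [hβ_lb k]
    have h5 : φ (y (k:ℝ) - y ((k:ℝ) + 1)) ≤ φ (4 * β (k + 1)) :=
      hmono.monotoneOn (mem_Ici.2 hd) (mem_Ici.2 (by linarith)) h4
    have h6 : φ (y (k:ℝ)) ≤ φ (y (k:ℝ) - y ((k:ℝ) + 1)) + φ (y ((k:ℝ) + 1)) := by
      have := aux_subadd φ hconc h0 hd (hy0 ((k:ℝ) + 1))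
      rwa [sub_add_cancel] at this
    have h7 : c ((k:ℝ) + 1) ≤ φ (y (k:ℝ) - y ((k:ℝ) + 1)) := by
      have e1 := hyφ (k:ℝ)
      have e2 := hyφ ((k:ℝ) + 1)
      have e3 := hc_half (k:ℝ)
      linarith
    exact le_trans h7 h5
  · apply strictAnti_nat_of_succ_lt
    intro k
    have hub := hβ_ub (k + 1)
    push_cast at hub
    rw [show ((k:ℝ) + 1) + 1 = (k:ℝ) + 2 by ring] at hub
    have hlb := hβ_lb k
    have hcx := hconvex (k:ℝ)
    show β (k + 1 + 1) < β (k + 1)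
    linarith
  · have hup : ∀ k : ℕ, β (k + 1) ≤ y (k:ℝ) / 2 := fun k => by
      linarith [hβ_ub k, hy_pos ((k:ℝ) + 1)]
    have hlo : ∀ k : ℕ, (0:ℝ) ≤ β (k + 1) := fun k => by
      linarith [hβ_lb k, hy_lt (lt_add_one (k:ℝ))]
    exact tendsto_of_tendsto_of_tendsto_of_le_of_le tendsto_const_nhds
      (by simpa using htendy.div_const 2) hlo hup
end

section
/- Let φ : [0,∞) → [0,∞) be strictly increasing, continuous, concave, with φ(0) = 0 and lim_{t→∞} φ(t) = ∞, assume ∫₀¹ ds/φ(s) < ∞, let N > 0 satisfy 2^{−N}(1 + ∫₀^{φ⁻¹(2^{−N})} ds/φ(s)) = 1, set α_k = 2^{−(N+k)}(1 + ∫₀^{φ⁻¹(2^{−(N+k)})} ds/φ(s)) for k ≥ 0, and β_k = (α_{k−1} − 2α_k)/4 for k ≥ 1. Define λ_k = α_{k−1}/β_k for k ≥ 1. Then there exists a constant C > 0, depending only on φ, such that for all k ≥ 2, sup_{1 ≤ ℓ < k} λ_ℓ ≤ C λ_k. -/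
open Set MeasureTheory Filter
open scoped Topology

/-- For `λ_k = α_{k−1}/β_k` there is a constant `C > 0` depending only on `φ`
such that `sup_{1 ≤ ℓ < k} λ_ℓ ≤ C λ_k` for all `k ≥ 2`. -/
theorem lambda_seq_sup_le (φ φinv : ℝ → ℝ)
    (hmono : StrictMonoOn φ (Ici 0))
    (hcont : ContinuousOn φ (Ici 0))
    (hconc : ConcaveOn ℝ (Ici 0) φ)
    (h0 : φ 0 = 0)
    (hnonneg : ∀ t, 0 ≤ t → 0 ≤ φ t)
    (htop : Tendsto φ atTop atTop)
    (hlinv : ∀ t, 0 ≤ t → φinv (φ t) = t)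
    (hrinv : ∀ s, 0 ≤ s → φ (φinv s) = s)
    (hint : IntegrableOn (fun s => 1 / φ s) (Ioo (0:ℝ) 1))
    (N : ℝ) (hN : 0 < N)
    (hNeq : (2:ℝ) ^ (-N) * (1 + ∫ s in Ioo (0:ℝ) (φinv ((2:ℝ) ^ (-N))), 1 / φ s) = 1)
    (α : ℕ → ℝ)
    (hα : ∀ k : ℕ, α k = (2:ℝ) ^ (-(N + (k:ℝ))) *
      (1 + ∫ s in Ioo (0:ℝ) (φinv ((2:ℝ) ^ (-(N + (k:ℝ))))), 1 / φ s))
    (β : ℕ → ℝ)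
    (hβ : ∀ k : ℕ, β (k + 1) = (α k - 2 * α (k + 1)) / 4)
    (lam : ℕ → ℝ)
    (hlam : ∀ k : ℕ, lam (k + 1) = α k / β (k + 1)) :
    ∃ C : ℝ, 0 < C ∧ ∀ k : ℕ, 2 ≤ k → ∀ ℓ : ℕ, 1 ≤ ℓ → ℓ < k → lam ℓ ≤ C * lam k := by
  -- notation
  set a : ℕ → ℝ := fun j => (2:ℝ) ^ (-(N + (j:ℝ))) with ha_def
  set x : ℕ → ℝ := fun j => φinv (a j) with hx_def
  set I : ℝ → ℝ := fun y => ∫ s in Ioo (0:ℝ) y, 1 / φ s with hI_def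
  have ha_pos : ∀ j, 0 < a j := fun j => Real.rpow_pos_of_pos (by norm_num) _
  have ha_succ : ∀ j, a (j + 1) = a j / 2 := by
    intro j
    have : -(N + ((j:ℕ)+1:ℕ):ℝ) = -(N + (j:ℝ)) - 1 := by push_cast; ring
    simp only [ha_def]
    push_cast
    rw [show -(N + ((j:ℝ)+1)) = -(N + (j:ℝ)) - 1 by ring, Real.rpow_sub (by norm_num),
      Real.rpow_one]
  -- φinv of nonneg is nonneg
  have hφinv_nonneg : ∀ s, 0 ≤ s → 0 ≤ φinv s := by
    intro s hs
    obtain ⟨M, hM⟩ := (htop.eventually_ge_atTop s).exists_forall_of_atTop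
    set M' := max M 0 with hM'
    have hφM : s ≤ φ M' := hM M' (le_max_left _ _)
    have hM'0 : (0:ℝ) ≤ M' := le_max_right _ _
    have : s ∈ Icc (φ 0) (φ M') := ⟨by rw [h0]; exact hs, hφM⟩
    obtain ⟨t, ht, hts⟩ := intermediate_value_Icc hM'0
      (hcont.mono (fun u hu => hu.1)) this
    rw [← hts, hlinv t ht.1]
    exact ht.1
  have hx_nonneg : ∀ j, 0 ≤ x j := fun j => hφinv_nonneg _ (ha_pos j).le
  have hφx : ∀ j, φ (x j) = a j := fun j => hrinv _ (ha_pos j).le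
  have hx_pos : ∀ j, 0 < x j := by
    intro j
    rcases (hx_nonneg j).lt_or_eq with h | h
    · exact h
    · exfalso; have := hφx j; rw [← h, h0] at this; exact (ha_pos j).ne this
  -- concavity: φ(2t) ≤ 2 φ(t) for t ≥ 0
  have hdouble : ∀ t : ℝ, 0 ≤ t → φ (2 * t) ≤ 2 * φ t := by
    intro t ht
    have h2t : (2:ℝ) * t ∈ Ici (0:ℝ) := by simp; linarith
    have := hconc.2 (self_mem_Ici) h2t (by norm_num : (0:ℝ) ≤ 1/2)
      (by norm_num : (0:ℝ) ≤ 1/2) (by norm_num)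
    simp only [smul_eq_mul, h0] at this
    have harg : (1/2:ℝ) * 0 + (1/2:ℝ) * (2 * t) = t := by ring
    rw [harg] at this
    linarith
  -- x is (strictly) decreasing, in fact halving
  have hx2 : ∀ j, 2 * x (j + 1) ≤ x j := by
    intro j
    have h1 : φ (2 * x (j + 1)) ≤ 2 * φ (x (j + 1)) := hdouble _ (hx_nonneg _)
    have h2 : 2 * φ (x (j + 1)) = a j := by rw [hφx, ha_succ]; ring
    have h3 : φ (2 * x (j + 1)) ≤ φ (x j) := by rw [hφx]; linarith
    have := (hmono.le_iff_le (by simp; linarith [hx_nonneg (j+1)]) (mem_Ici.2 (hx_nonneg j))).1 h3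
    exact this
  have hx_lt : ∀ j, x (j + 1) < x j := by
    intro j; have := hx2 j; have := hx_pos (j + 1); linarith
  have hx_anti : Antitone x := antitone_nat_of_succ_le (fun j => (hx_lt j).le)
  -- integrability on any Ioo 0 y
  have hInt : ∀ y : ℝ, IntegrableOn (fun s => 1 / φ s) (Ioo 0 y) := by
    intro y
    rcases le_or_gt y 1 with h | h
    · exact hint.mono_set (Ioo_subset_Ioo le_rfl h)
    · have h1 : IntegrableOn (fun s => 1 / φ s) (Icc 1 y) := by
        apply ContinuousOn.integrableOn_Icc
        apply ContinuousOn.div continuousOn_const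
          (hcont.mono (fun u hu => le_trans zero_le_one hu.1))
        intro s hs
        have : φ 0 < φ s := hmono self_mem_Ici (le_trans zero_le_one hs.1) (by linarith [hs.1])
        rw [h0] at this; exact this.ne'
      have hsub : Ioo (0:ℝ) y ⊆ Ioo 0 1 ∪ Icc 1 y := by
        intro s hs
        rcases lt_or_ge s 1 with h' | h'
        · exact Or.inl ⟨hs.1, h'⟩
        · exact Or.inr ⟨h', hs.2.le⟩
      exact (hint.union h1).mono_set hsub
  have hf_nonneg : ∀ s : ℝ, 0 < s → 0 ≤ 1 / φ s := by
    intro s hs; exact div_nonneg zero_le_one (hnonneg s hs.le)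
  have hI_nonneg : ∀ y, 0 ≤ I y := by
    intro y
    exact setIntegral_nonneg measurableSet_Ioo (fun s hs => hf_nonneg s hs.1)
  have hI_mono : ∀ {u v : ℝ}, u ≤ v → I u ≤ I v := by
    intro u v huv
    apply setIntegral_mono_set (hInt v)
      (ae_restrict_of_forall_mem measurableSet_Ioo (fun s hs => hf_nonneg s hs.1))
    exact HasSubset.Subset.eventuallyLE (Ioo_subset_Ioo le_rfl huv)
  -- splitting the integral
  have hsplit : ∀ {u v : ℝ}, 0 < u → u ≤ v →
      I v = I u + ∫ s in Ioo u v, 1 / φ s := by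
    intro u v hu huv
    have hun : Ioo (0:ℝ) u ∪ Ico u v = Ioo 0 v := Ioo_union_Ico_eq_Ioo hu huv
    have hdisj : Disjoint (Ioo (0:ℝ) u) (Ico u v) := by
      rw [Set.disjoint_left]; intro s hs1 hs2; exact absurd hs2.1 (not_le.2 hs1.2)
    have hIco : IntegrableOn (fun s => 1 / φ s) (Ico u v) := by
      refine (hInt v).mono_set ?_
      intro s hs; exact ⟨lt_of_lt_of_le hu hs.1, hs.2⟩
    calc I v = ∫ s in Ioo (0:ℝ) u ∪ Ico u v, 1 / φ s := by rw [hun]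
      _ = I u + ∫ s in Ico u v, 1 / φ s := by
          rw [setIntegral_union hdisj measurableSet_Ico
            ((hInt v).mono_set (Ioo_subset_Ioo le_rfl huv)) hIco]
      _ = I u + ∫ s in Ioo u v, 1 / φ s := by rw [integral_Ico_eq_integral_Ioo]
  -- bounds on ∫ over Ioo u v of 1/φ
  have hφpos : ∀ u : ℝ, 0 < u → 0 < φ u := by
    intro u hu
    have := hmono self_mem_Ici (mem_Ici.2 hu.le) hu
    rwa [h0] at this
  have hIoo_int : ∀ {u v : ℝ}, 0 < u → IntegrableOn (fun s => 1 / φ s) (Ioo u v) := by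
    intro u v hu
    exact (hInt v).mono_set (fun s hs => ⟨hu.trans hs.1, hs.2⟩)
  have hub : ∀ {u v : ℝ}, 0 < u → u ≤ v →
      (∫ s in Ioo u v, 1 / φ s) ≤ (v - u) * (1 / φ u) := by
    intro u v hu huv
    have h1 : (∫ s in Ioo u v, 1 / φ s) ≤ ∫ _ in Ioo u v, 1 / φ u := by
      apply setIntegral_mono_on (hIoo_int hu)
        (integrableOn_const measure_Ioo_lt_top.ne enorm_ne_top) measurableSet_Ioo
      intro s hs
      apply one_div_le_one_div_of_le (hφpos u hu)
      exact (hmono.le_iff_le (mem_Ici.2 hu.le) (mem_Ici.2 (hu.trans hs.1).le)).2 hs.1.le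
    rw [setIntegral_const, Real.volume_real_Ioo_of_le huv,
      smul_eq_mul] at h1
    exact h1
  have hlb : ∀ {u v : ℝ}, 0 < u → u ≤ v →
      (v - u) * (1 / φ v) ≤ ∫ s in Ioo u v, 1 / φ s := by
    intro u v hu huv
    have h1 : (∫ _ in Ioo u v, 1 / φ v) ≤ ∫ s in Ioo u v, 1 / φ s := by
      apply setIntegral_mono_on (integrableOn_const measure_Ioo_lt_top.ne enorm_ne_top)
        (hIoo_int hu) measurableSet_Ioo
      intro s hs
      apply one_div_le_one_div_of_le (hφpos s (hu.trans hs.1))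
      exact (hmono.le_iff_le (mem_Ici.2 (hu.trans hs.1).le)
        (mem_Ici.2 (hu.trans_le huv).le)).2 hs.2.le
    rw [setIntegral_const, Real.volume_real_Ioo_of_le huv,
      smul_eq_mul] at h1
    exact h1
  -- D j := integral over (x (j+1), x j)
  set D : ℕ → ℝ := fun j => ∫ s in Ioo (x (j + 1)) (x j), 1 / φ s with hD_def
  set ρ : ℕ → ℝ := fun j => x j / a j with hρ_def
  have hρ_pos : ∀ j, 0 < ρ j := fun j => div_pos (hx_pos j) (ha_pos j)
  have hρ_anti : Antitone ρ := by
    apply antitone_nat_of_succ_le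
    intro j
    rw [hρ_def]
    simp only
    rw [ha_succ j, div_div_eq_mul_div, div_le_div_iff₀ (ha_pos j) (ha_pos j)]
    nlinarith [hx2 j, ha_pos j]
  -- D bounds: ρ j / 2 ≤ D j ≤ 2 * ρ j
  have hD_lb : ∀ j, ρ j / 2 ≤ D j := by
    intro j
    have h1 : (x j - x (j + 1)) * (1 / φ (x j)) ≤ D j := hlb (hx_pos _) (hx_lt j).le
    have h2 : x j / 2 ≤ x j - x (j + 1) := by linarith [hx2 j]
    have h3 : (0:ℝ) < 1 / φ (x j) := by rw [hφx]; exact one_div_pos.2 (ha_pos j)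
    calc ρ j / 2 = (x j / 2) * (1 / φ (x j)) := by rw [hρ_def]; simp only; rw [hφx]; ring
      _ ≤ (x j - x (j + 1)) * (1 / φ (x j)) := by nlinarith
      _ ≤ D j := h1
  have hD_ub : ∀ j, D j ≤ 2 * ρ j := by
    intro j
    have h1 : D j ≤ (x j - x (j + 1)) * (1 / φ (x (j + 1))) := hub (hx_pos _) (hx_lt j).le
    have h2 : (1 : ℝ) / φ (x (j + 1)) = 2 / a j := by
      rw [hφx, ha_succ]
      field_simp
    calc D j ≤ (x j - x (j + 1)) * (1 / φ (x (j + 1))) := h1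
      _ = (x j - x (j + 1)) * (2 / a j) := by rw [h2]
      _ ≤ x j * (2 / a j) := by
          have : (0:ℝ) < 2 / a j := by positivity
          nlinarith [hx_pos (j + 1)]
      _ = 2 * ρ j := by rw [hρ_def]; field_simp
  have hD_pos : ∀ j, 0 < D j := fun j => lt_of_lt_of_le (half_pos (hρ_pos j)) (hD_lb j)
  -- α, β, lam in terms of a, I, D
  have hα' : ∀ j, α j = a j * (1 + I (x j)) := fun j => hα j
  have hβ' : ∀ j, β (j + 1) = a j * D j / 4 := by
    intro j
    rw [hβ, hα', hα', ha_succ]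
    have hsp := hsplit (hx_pos (j + 1)) (hx_lt j).le
    rw [hD_def]
    simp only
    rw [show (∫ s in Ioo (x (j+1)) (x j), 1 / φ s) = I (x j) - I (x (j + 1)) by
      rw [hsp]; ring]
    ring
  have hlam' : ∀ j, lam (j + 1) = 4 * (1 + I (x j)) / D j := by
    intro j
    have haj := (ha_pos j).ne'
    have hDj := (hD_pos j).ne'
    rw [hlam, hα', hβ']
    field_simp
  -- 1 + I (x 0) = 2 ^ N
  have hx0 : x 0 = φinv ((2:ℝ) ^ (-N)) := by
    simp only [hx_def, ha_def, Nat.cast_zero, add_zero]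
  have hNeq' : (2:ℝ) ^ (-N) * (1 + I (φinv ((2:ℝ) ^ (-N)))) = 1 := hNeq
  have hNum0 : 1 + I (x 0) = 2 ^ N := by
    rw [hx0]
    have h2 : (2:ℝ) ^ N * ((2:ℝ) ^ (-N)) = 1 := by
      rw [← Real.rpow_add (by norm_num)]
      simp
    have := congrArg (fun z => (2:ℝ) ^ N * z) hNeq'
    simp only [mul_one, ← mul_assoc, h2, one_mul] at this
    linarith
  have hNum_le : ∀ m : ℕ, 1 + I (x m) ≤ 2 ^ N := by
    intro m
    have := hI_mono (hx_anti (Nat.zero_le m))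
    linarith
  have hNum_ge : ∀ m : ℕ, (1:ℝ) ≤ 1 + I (x m) := by
    intro m; linarith [hI_nonneg (x m)]
  -- conclusion
  refine ⟨4 * 2 ^ N, by positivity, ?_⟩
  intro k hk ℓ hℓ hℓk
  obtain ⟨m, rfl⟩ : ∃ m, ℓ = m + 1 := ⟨ℓ - 1, (Nat.succ_pred_eq_of_pos hℓ).symm⟩
  obtain ⟨n, rfl⟩ : ∃ n, k = n + 1 := ⟨k - 1, (Nat.succ_pred_eq_of_pos (by omega)).symm⟩
  have hmn : m ≤ n := by omega
  have h1 : lam (m + 1) ≤ 4 * 2 ^ N / (ρ m / 2) := by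
    rw [hlam']
    apply div_le_div₀ (by positivity) ?_ (half_pos (hρ_pos m)) (hD_lb m)
    linarith [hNum_le m]
  have h2 : 2 / ρ n ≤ lam (n + 1) := by
    have hr : (2:ℝ) / ρ n = 4 / (2 * ρ n) := by
      rw [div_eq_div_iff (hρ_pos n).ne' (mul_pos two_pos (hρ_pos n)).ne']
      ring
    rw [hlam', hr]
    apply div_le_div₀ (by nlinarith [hNum_ge n, hI_nonneg (x n)]) (by linarith [hNum_ge n]) (hD_pos n) (hD_ub n)
  calc lam (m + 1) ≤ 4 * 2 ^ N / (ρ m / 2) := h1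
    _ = 8 * 2 ^ N / ρ m := by
        rw [div_eq_div_iff (half_pos (hρ_pos m)).ne' (hρ_pos m).ne']
        ring
    _ ≤ 8 * 2 ^ N / ρ n := by
        apply div_le_div_of_nonneg_left (by positivity) (hρ_pos n) (hρ_anti hmn)
    _ = (4 * 2 ^ N) * (2 / ρ n) := by ring
    _ ≤ (4 * 2 ^ N) * lam (n + 1) := by
        apply mul_le_mul_of_nonneg_left h2 (by positivity)
end
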